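/- There is no graph whose cycle matroid is M_n (the disjoint union of a circuit C_n of length n ≥ 3 and a single loop ℓ) and that meets all the connectivity constraints X[i,n] = C_n − e_i − e_{i+1} + ℓ for i ∈ ℤ_n, where meeting a constraint X means that X is a connected edge set of the graph. -/

import Mathlib

/-- A multigraph: each edge has an unordered pair of endvertices (possibly equal,
i.e. loops are allowed). -/
structure MGraph (V E : Type*) where
  ends : E → Sym2 V

/-- An edge set `X` of a graph is connected if the subgraph consisting of `X` and its
incident vertices is connected: any two edges of `X` are linked by a chain of edges of
`X` in which consecutive edges share a vertex. -/
def EdgeConnected {V E : Type*} (G : MGraph V E) (X : Set E) : Prop :=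
  ∀ a ∈ X, ∀ b ∈ X, Relation.ReflTransGen
    (fun x y => x ∈ X ∧ y ∈ X ∧ ∃ v : V, v ∈ G.ends x ∧ v ∈ G.ends y) a b

/-- The degree of the vertex `v` in the edge set `X`: loops count twice. -/
noncomputable def degIn {V E : Type*} (G : MGraph V E) (X : Set E) (v : V) : ℕ :=
  {e ∈ X | v ∈ G.ends e ∧ ¬ (G.ends e).IsDiag}.ncard +
    2 * {e ∈ X | G.ends e = Sym2.diag v}.ncard

/-- A circuit of the cycle matroid of a graph: the edge set of a cycle, i.e. a
nonempty finite connected edge set in which every vertex has degree `0` or `2`. -/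
def GraphCircuit {V E : Type*} (G : MGraph V E) (X : Set E) : Prop :=
  X.Nonempty ∧ X.Finite ∧ EdgeConnected G X ∧ ∀ v : V, degIn G X v = 0 ∨ degIn G X v = 2

/-- The set of circuits of the cycle matroid of the graph `G`. -/
def graphCircuits {V E : Type*} (G : MGraph V E) : Set (Set E) :=
  {X | GraphCircuit G X}

/-- The ground set of the matroid `M_n`: the elements `e_i` (`i ∈ ℤ_n`) of the
`n`-circuit together with the loop `ℓ`. -/
abbrev MnElem (n : ℕ) := ZMod n ⊕ Unit

/-- The circuits of `M_n`, the direct sum of a circuit on `e_1, …, e_n` and a loop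
`ℓ`: the set of all `e_i`, and the singleton of the loop. -/
def MnCircuits (n : ℕ) : Set (Set (MnElem n)) :=
  {Set.range Sum.inl, {Sum.inr ()}}

/-- The connectivity constraint `X[i,n]`: all cycle elements except `e_i` and
`e_{i+1}`, together with the loop `ℓ`. -/
def MnConstraint (n : ℕ) (i : ZMod n) : Set (MnElem n) :=
  (Set.range Sum.inl \ {Sum.inl i, Sum.inl (i + 1)}) ∪ {Sum.inr ()}

namespace NoGraphAux


lemma sym2_exists_pair {α : Type*} (s : Sym2 α) : ∃ x y, s = s(x, y) := by
  induction s using Sym2.ind with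
  | _ x y => exact ⟨x, y, rfl⟩

variable {V E : Type*} (G : MGraph V E)

def cover (X : Set E) : Set V := {v | ∃ e ∈ X, v ∈ G.ends e}

lemma cover_finite {X : Set E} (h : X.Finite) : (cover G X).Finite := by
  have hsub : cover G X ⊆ ⋃ e ∈ X, {v | v ∈ G.ends e} := by
    rintro v ⟨e, he, hv⟩; exact Set.mem_biUnion he hv
  refine (h.biUnion fun e _ => ?_).subset hsub
  obtain ⟨x, y, hxy⟩ := sym2_exists_pair (G.ends e)
  have : {v | v ∈ G.ends e} ⊆ {x, y} := by
    intro v hv; rw [hxy] at hv; simpa using hv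
  exact ((Set.finite_singleton y).insert x).subset this

lemma exists_exit {X T : Set E} {a b : E}
    (h : Relation.ReflTransGen
      (fun x y => x ∈ X ∧ y ∈ X ∧ ∃ v : V, v ∈ G.ends x ∧ v ∈ G.ends y) a b)
    (ha : a ∈ T) (hb : b ∉ T) :
    ∃ x ∈ T, ∃ y ∈ X, y ∉ T ∧ ∃ v : V, v ∈ G.ends x ∧ v ∈ G.ends y := by
  induction h with
  | refl => exact absurd ha hb
  | tail h' hr ih =>
    rename_i c d
    by_cases hc : c ∈ T
    · exact ⟨c, hc, d, hr.2.1, hb, hr.2.2⟩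
    · exact ih hc

lemma cover_card_le {X : Set E} (hfin : X.Finite) (hconn : EdgeConnected G X)
    {a : E} (ha : a ∈ X) : (cover G X).ncard ≤ X.ncard + 1 := by
  suffices H : ∀ m : ℕ, ∀ T : Set E, T ⊆ X → a ∈ T →
      (cover G T).ncard ≤ T.ncard + 1 → X.ncard ≤ T.ncard + m →
      (cover G X).ncard ≤ X.ncard + 1 by
    refine H X.ncard {a} (by simpa using ha) rfl ?_ (by simp)
    obtain ⟨x, y, hxy⟩ := sym2_exists_pair (G.ends a)
    have hc : cover G {a} ⊆ {x, y} := by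
      rintro v ⟨e, he, hv⟩
      rw [Set.mem_singleton_iff] at he; subst he
      rw [hxy] at hv; simpa using hv
    calc (cover G {a}).ncard ≤ ({x, y} : Set V).ncard :=
          Set.ncard_le_ncard hc ((Set.finite_singleton y).insert x)
      _ ≤ 2 := by
          rcases eq_or_ne x y with rfl | hne
          · simp
          · rw [Set.ncard_pair hne]
      _ ≤ ({a} : Set E).ncard + 1 := by simp
  intro m
  induction m with
  | zero =>
    intro T hTX haT hcov hle
    have hTeq : T = X := Set.eq_of_subset_of_ncard_le hTX (by simpa using hle) hfin
    exact hTeq ▸ hcov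
  | succ m ih =>
    intro T hTX haT hcov hle
    by_cases hTeq : T = X
    · exact hTeq ▸ hcov
    · have hTfin : T.Finite := hfin.subset hTX
      obtain ⟨b, hbX, hbT⟩ : ∃ b ∈ X, b ∉ T := by
        by_contra hcon; push_neg at hcon
        exact hTeq (subset_antisymm hTX hcon)
      obtain ⟨x, hxT, y, hyX, hyT, v, hvx, hvy⟩ := exists_exit G (hconn a ha b hbX) haT hbT
      have hT'card : (insert y T).ncard = T.ncard + 1 := Set.ncard_insert_of_notMem hyT hTfin
      refine ih (insert y T) (Set.insert_subset hyX hTX) (Set.mem_insert_of_mem _ haT) ?_ ?_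
      · obtain ⟨p, q, hpq⟩ := sym2_exists_pair (G.ends y)
        have hvmem : v ∈ cover G T := ⟨x, hxT, hvx⟩
        have hvpq : v = p ∨ v = q := by rw [hpq] at hvy; simpa using hvy
        have hcovfin : (cover G T).Finite := cover_finite G hTfin
        have hkey : ∀ w : V, w = p ∨ w = q →
            cover G (insert y T) ⊆ insert w (cover G T) → (cover G (insert y T)).ncard ≤ (insert y T).ncard + 1 := by
          intro w hw hsub
          calc (cover G (insert y T)).ncard ≤ (insert w (cover G T)).ncard :=
                Set.ncard_le_ncard hsub (hcovfin.insert w)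
            _ ≤ (cover G T).ncard + 1 := Set.ncard_insert_le _ _
            _ ≤ (insert y T).ncard + 1 := by omega
        rcases hvpq with rfl | rfl
        · refine hkey q (Or.inr rfl) ?_
          rintro w ⟨e, he, hw⟩
          rcases Set.mem_insert_iff.1 he with rfl | heT
          · rw [hpq] at hw
            rcases Sym2.mem_iff.1 hw with rfl | rfl
            · exact Set.mem_insert_of_mem _ hvmem
            · exact Set.mem_insert _ _
          · exact Set.mem_insert_of_mem _ ⟨e, heT, hw⟩
        · refine hkey p (Or.inl rfl) ?_
          rintro w ⟨e, he, hw⟩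
          rcases Set.mem_insert_iff.1 he with rfl | heT
          · rw [hpq] at hw
            rcases Sym2.mem_iff.1 hw with rfl | rfl
            · exact Set.mem_insert _ _
            · exact Set.mem_insert_of_mem _ hvmem
          · exact Set.mem_insert_of_mem _ ⟨e, heT, hw⟩
      · omega



variable {V E : Type*} (G : MGraph V E)

lemma strip_loop {X : Set E} {l : E} {u : V} (hl : G.ends l = Sym2.diag u)
    (hX : EdgeConnected G X) : EdgeConnected G (X \ {l}) := by
  intro a ha b hb
  have key : ∀ b' : E, Relation.ReflTransGen
      (fun x y => x ∈ X ∧ y ∈ X ∧ ∃ v : V, v ∈ G.ends x ∧ v ∈ G.ends y) a b' →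
      (b' ∈ X \ {l} → Relation.ReflTransGen
        (fun x y => x ∈ X \ {l} ∧ y ∈ X \ {l} ∧ ∃ v : V, v ∈ G.ends x ∧ v ∈ G.ends y) a b') ∧
      (b' = l → ∀ y ∈ X \ {l}, u ∈ G.ends y → Relation.ReflTransGen
        (fun x y => x ∈ X \ {l} ∧ y ∈ X \ {l} ∧ ∃ v : V, v ∈ G.ends x ∧ v ∈ G.ends y) a y) := by
    intro b' hchain
    induction hchain with
    | refl =>
      refine ⟨fun _ => .refl, fun h => absurd (Set.mem_singleton_iff.mpr h) ha.2⟩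
    | tail h' hr ih =>
      rename_i c d
      constructor
      · intro hd
        by_cases hc : c = l
        · subst hc
          obtain ⟨_, hdX, v, hvl, hvd⟩ := hr
          have hv : v = u := by rw [hl] at hvl; simpa [Sym2.diag] using hvl
          exact ih.2 rfl d hd (hv ▸ hvd)
        · have hcX : c ∈ X \ {l} := ⟨hr.1, fun h => hc (Set.mem_singleton_iff.mp h)⟩
          exact (ih.1 hcX).tail ⟨hcX, hd, hr.2.2⟩
      · intro hdl y hy huy
        rw [hdl] at hr
        obtain ⟨hcX, _, v, hvc, hvl⟩ := hr
        have hv : v = u := by rw [hl] at hvl; simpa [Sym2.diag] using hvl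
        by_cases hc : c = l
        · exact ih.2 hc y hy huy
        · have hcX' : c ∈ X \ {l} := ⟨hcX, fun h => hc (Set.mem_singleton_iff.mp h)⟩
          exact (ih.1 hcX').tail ⟨hcX', hy, u, hv ▸ hvc, huy⟩
  exact (key b (hX a ha.1 b hb.1)).1 hb

lemma reach_from_loop {X : Set E} {l : E} {u : V} (hl : G.ends l = Sym2.diag u)
    {a b : E} (h : Relation.ReflTransGen
      (fun x y => x ∈ X ∧ y ∈ X ∧ ∃ v : V, v ∈ G.ends x ∧ v ∈ G.ends y) a b)
    (hb : b ≠ l) : a = l → ∃ e ∈ X, e ≠ l ∧ u ∈ G.ends e := by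
  induction h using Relation.ReflTransGen.head_induction_on with
  | refl => exact fun h => absurd h hb
  | head hr h' ih =>
    rename_i a' c
    intro hal
    rw [hal] at hr
    obtain ⟨_, hcX, v, hvl, hvc⟩ := hr
    have hv : v = u := by rw [hl] at hvl; simpa [Sym2.diag] using hvl
    by_cases hc : c = l
    · exact ih hc
    · exact ⟨c, hcX, hc, hv ▸ hvc⟩

end NoGraphAux

/-- There is no graph whose cycle matroid is `M_n` (the disjoint union of an
`n`-circuit and a loop, `n ≥ 3`) meeting all the connectivity constraints
`X[i,n] = C_n − e_i − e_{i+1} + ℓ`. -/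

theorem no_graph_meets_all_constraints (n : ℕ) (hn : 3 ≤ n) :
    ¬ ∃ (V : Type) (G : MGraph V (MnElem n)),
        graphCircuits G = MnCircuits n ∧
          ∀ i : ZMod n, EdgeConnected G (MnConstraint n i) := by
  classical
  rintro ⟨Vt, G, h1, h2⟩
  haveI : NeZero n := ⟨by omega⟩
  open NoGraphAux in
  set C : Set (MnElem n) := Set.range Sum.inl with hCdef
  -- basic ZMod facts
  have h10 : (1 : ZMod n) ≠ 0 := by
    intro h
    have h1' : ((1 : ℕ) : ZMod n).val = 1 := ZMod.val_cast_of_lt (by omega)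
    rw [Nat.cast_one, h, ZMod.val_zero] at h1'
    omega
  have h20 : (2 : ZMod n) ≠ 0 := by
    intro h
    have h2' : ((2 : ℕ) : ZMod n).val = 2 := ZMod.val_cast_of_lt (by omega)
    rw [Nat.cast_ofNat, h, ZMod.val_zero] at h2'
    omega
  have hstep1 : ∀ i : ZMod n, i + 1 ≠ i := by
    intro i h; exact h10 (by rwa [add_eq_left] at h)
  have hstep2 : ∀ i : ZMod n, i + 2 ≠ i := by
    intro i h; exact h20 (by rwa [add_eq_left] at h)
  have hstep21 : ∀ i : ZMod n, i + 2 ≠ i + 1 := by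
    intro i h
    apply hstep1 (i + 1)
    calc i + 1 + 1 = i + 2 := by ring
      _ = i + 1 := h
  -- the two circuits
  have hC : GraphCircuit G C := by
    have : C ∈ graphCircuits G := by rw [h1]; exact Set.mem_insert _ _
    exact this
  have hL : GraphCircuit G {Sum.inr ()} := by
    have : ({Sum.inr ()} : Set (MnElem n)) ∈ graphCircuits G := by
      rw [h1]; exact Set.mem_insert_iff.mpr (Or.inr rfl)
    exact this
  -- the loop sits at a vertex u
  obtain ⟨u, hu⟩ : ∃ u : Vt, G.ends (Sum.inr ()) = Sym2.diag u := by
    obtain ⟨x, y, hxy⟩ := NoGraphAux.sym2_exists_pair (G.ends (Sum.inr () : MnElem n))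
    rcases eq_or_ne x y with rfl | hne
    · exact ⟨x, hxy⟩
    · exfalso
      have hd := hL.2.2.2 x
      have e1 : {e ∈ ({Sum.inr ()} : Set (MnElem n)) | x ∈ G.ends e ∧ ¬ (G.ends e).IsDiag}
          = {Sum.inr ()} := by
        ext e
        simp only [Set.mem_setOf_eq, Set.mem_singleton_iff, and_iff_left_iff_imp]
        rintro rfl
        rw [hxy]
        exact ⟨by simp, by simp [hne]⟩
      have e2 : {e ∈ ({Sum.inr ()} : Set (MnElem n)) | G.ends e = Sym2.diag x} = ∅ := by
        ext e
        simp only [Set.mem_setOf_eq, Set.mem_singleton_iff, Set.mem_empty_iff_false, iff_false,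
          not_and]
        rintro rfl h
        rw [hxy] at h
        have : y = x := by
          have := Sym2.eq_iff.mp h
          tauto
        exact hne this.symm
      rw [degIn, e1, e2] at hd
      simp at hd
  -- no cycle edge is a loop
  have hnotdiag : ∀ j : ZMod n, ¬ (G.ends (Sum.inl j)).IsDiag := by
    intro j hdiag
    obtain ⟨x, y, hxy⟩ := NoGraphAux.sym2_exists_pair (G.ends (Sum.inl j : MnElem n))
    have hxyeq : x = y := by rw [hxy] at hdiag; exact Sym2.mk_isDiag_iff.mp hdiag
    subst hxyeq
    have hcirc : GraphCircuit G {Sum.inl j} := by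
      refine ⟨⟨_, rfl⟩, Set.finite_singleton _, ?_, ?_⟩
      · intro a ha b hb
        rw [Set.mem_singleton_iff] at ha hb; subst ha; subst hb
        exact .refl
      · intro v
        by_cases hv : v = x
        · right
          subst hv
          rw [degIn]
          have e1 : {e ∈ ({Sum.inl j} : Set (MnElem n)) | v ∈ G.ends e ∧ ¬ (G.ends e).IsDiag}
              = ∅ := by
            ext e
            simp only [Set.mem_setOf_eq, Set.mem_singleton_iff, Set.mem_empty_iff_false,
              iff_false, not_and]
            rintro rfl _
            rw [hxy]; simp
          have e2 : {e ∈ ({Sum.inl j} : Set (MnElem n)) | G.ends e = Sym2.diag v}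
              = {Sum.inl j} := by
            ext e
            simp only [Set.mem_setOf_eq, Set.mem_singleton_iff, and_iff_left_iff_imp]
            rintro rfl
            rw [hxy]; rfl
          rw [e1, e2]; simp
        · left
          rw [degIn]
          have e1 : {e ∈ ({Sum.inl j} : Set (MnElem n)) | v ∈ G.ends e ∧ ¬ (G.ends e).IsDiag}
              = ∅ := by
            ext e
            simp only [Set.mem_setOf_eq, Set.mem_singleton_iff, Set.mem_empty_iff_false,
              iff_false, not_and]
            rintro rfl h
            rw [hxy] at h
            rcases Sym2.mem_iff.mp h with rfl | rfl <;> exact absurd rfl hv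
          have e2 : {e ∈ ({Sum.inl j} : Set (MnElem n)) | G.ends e = Sym2.diag v} = ∅ := by
            ext e
            simp only [Set.mem_setOf_eq, Set.mem_singleton_iff, Set.mem_empty_iff_false,
              iff_false, not_and]
            rintro rfl h
            rw [hxy] at h
            have := Sym2.eq_iff.mp h
            have : x = v := by tauto
            exact hv this.symm
          rw [e1, e2]; simp
    have hmem : ({Sum.inl j} : Set (MnElem n)) ∈ MnCircuits n := by rw [← h1]; exact hcirc
    rcases Set.mem_insert_iff.mp hmem with heq | heq
    · have : (Sum.inl (j + 1) : MnElem n) ∈ ({Sum.inl j} : Set (MnElem n)) := by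
        rw [heq]; exact ⟨j + 1, rfl⟩
      rw [Set.mem_singleton_iff] at this
      exact hstep1 j (Sum.inl.inj this)
    · rw [Set.mem_singleton_iff] at heq
      have : (Sum.inl j : MnElem n) ∈ ({Sum.inr ()} : Set (MnElem n)) := by
        rw [← heq]; rfl
      simp at this
  -- degrees in C
  have hD : ∀ v : Vt, ({e ∈ C | v ∈ G.ends e}).ncard = 0 ∨ ({e ∈ C | v ∈ G.ends e}).ncard = 2 := by
    intro v
    have hd := hC.2.2.2 v
    have e2 : {e ∈ C | G.ends e = Sym2.diag v} = ∅ := by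
      ext e
      simp only [Set.mem_setOf_eq, Set.mem_empty_iff_false, iff_false, not_and]
      rintro ⟨j, rfl⟩ h
      exact hnotdiag j (by rw [h]; exact Sym2.diag_isDiag v)
    have e1 : {e ∈ C | v ∈ G.ends e ∧ ¬ (G.ends e).IsDiag} = {e ∈ C | v ∈ G.ends e} := by
      ext e
      simp only [Set.mem_setOf_eq]
      constructor
      · rintro ⟨h1', h2', _⟩; exact ⟨h1', h2'⟩
      · rintro ⟨hc, hv⟩
        obtain ⟨j, rfl⟩ := hc
        exact ⟨⟨j, rfl⟩, hv, hnotdiag j⟩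
    rw [degIn, e1, e2] at hd
    simpa using hd
  have hCfin : C.Finite := Set.finite_range _
  have hDfin : ∀ v : Vt, ({e ∈ C | v ∈ G.ends e}).Finite :=
    fun v => hCfin.subset (Set.sep_subset _ _)
  -- constraints, with the loop stripped
  have hYconst : ∀ i : ZMod n,
      MnConstraint n i \ {Sum.inr ()} = C \ {Sum.inl i, Sum.inl (i + 1)} := by
    intro i
    ext e
    simp only [MnConstraint, Set.mem_diff, Set.mem_union, Set.mem_singleton_iff,
      Set.mem_insert_iff, hCdef, Set.mem_range]
    constructor
    · rintro ⟨h | h, hne⟩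
      · exact h
      · exact absurd h hne
    · rintro ⟨⟨j, rfl⟩, hne⟩
      exact ⟨Or.inl ⟨⟨j, rfl⟩, hne⟩, by simp⟩
  have hYconn : ∀ i : ZMod n, EdgeConnected G (C \ {Sum.inl i, Sum.inl (i + 1)}) := by
    intro i
    have := NoGraphAux.strip_loop G hu (h2 i)
    rwa [hYconst i] at this
  have hmemY : ∀ i : ZMod n, (Sum.inl (i + 2) : MnElem n) ∈ C \ {Sum.inl i, Sum.inl (i + 1)} := by
    intro i
    refine ⟨⟨i + 2, rfl⟩, ?_⟩
    simp only [Set.mem_insert_iff, Set.mem_singleton_iff, Sum.inl.injEq]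
    push_neg
    exact ⟨hstep2 i, hstep21 i⟩
  -- the loop vertex touches an edge of every stripped constraint
  have hreach : ∀ i : ZMod n, ∃ e ∈ C \ {Sum.inl i, Sum.inl (i + 1)}, u ∈ G.ends e := by
    intro i
    have hmem1 : (Sum.inr () : MnElem n) ∈ MnConstraint n i := Or.inr rfl
    have hmem2 : (Sum.inl (i + 2) : MnElem n) ∈ MnConstraint n i := by
      exact Or.inl (hmemY i)
    obtain ⟨e, heX, hel, hue⟩ :=
      NoGraphAux.reach_from_loop G hu (h2 i _ hmem1 _ hmem2) (by simp) rfl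
    refine ⟨e, ?_, hue⟩
    rcases heX with h | h
    · exact h
    · exact absurd (Set.mem_singleton_iff.mp h) hel
  -- cardinalities
  have hCcard : C.ncard = n := by
    have h1' : Nat.card C = Nat.card (ZMod n) := Nat.card_range_of_injective Sum.inl_injective
    rw [← Nat.card_coe_set_eq, h1', Nat.card_eq_fintype_card, ZMod.card]
  have hcovCfin : (NoGraphAux.cover G C).Finite := NoGraphAux.cover_finite G hCfin
  have hDtwo : ∀ v : Vt, v ∈ NoGraphAux.cover G C → ({e ∈ C | v ∈ G.ends e}).ncard = 2 := by
    intro v hv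
    rcases hD v with h0 | h2'
    · exfalso
      obtain ⟨e, he, hve⟩ := hv
      have hemp : {e ∈ C | v ∈ G.ends e} = ∅ := (Set.ncard_eq_zero (hDfin v)).mp h0
      have hmm : e ∈ {e ∈ C | v ∈ G.ends e} := ⟨he, hve⟩
      rw [hemp] at hmm
      simp at hmm
    · exact h2'
  set Wf := hcovCfin.toFinset with hWf
  set Cf := hCfin.toFinset with hCf
  have hCfcard : Cf.card = n := by
    rw [hCf, ← Set.ncard_eq_toFinset_card C hCfin, hCcard]
  have key1 : ∀ v ∈ Wf, (Cf.filter (fun e => v ∈ G.ends e)).card = 2 := by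
    intro v hv
    have hvC : v ∈ NoGraphAux.cover G C := hcovCfin.mem_toFinset.mp hv
    have hD2 := hDtwo v hvC
    have hset : {e ∈ C | v ∈ G.ends e} = ↑(Cf.filter (fun e => v ∈ G.ends e)) := by
      ext e; simp [hCf, Set.Finite.mem_toFinset, hCdef]
    rw [hset, Set.ncard_coe_finset] at hD2
    exact hD2
  have key2 : ∀ e ∈ Cf, (Wf.filter (fun v => v ∈ G.ends e)).card = 2 := by
    intro e he
    have heC : e ∈ C := hCfin.mem_toFinset.mp he
    obtain ⟨j, rfl⟩ := heC
    obtain ⟨x, y, hxy⟩ := NoGraphAux.sym2_exists_pair (G.ends (Sum.inl j : MnElem n))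
    have hxney : x ≠ y := by
      intro h; exact hnotdiag j (by rw [hxy, h]; exact Sym2.mk_isDiag_iff.mpr rfl)
    have hset : Wf.filter (fun v => v ∈ G.ends (Sum.inl j : MnElem n)) = {x, y} := by
      ext v
      simp only [Finset.mem_filter, Finset.mem_insert, Finset.mem_singleton]
      constructor
      · rintro ⟨_, hv⟩
        rw [hxy] at hv; exact Sym2.mem_iff.mp hv
      · have hmem : v = x ∨ v = y → v ∈ G.ends (Sum.inl j : MnElem n) := by
          rintro (rfl | rfl) <;> rw [hxy] <;> simp
        intro h
        exact ⟨hcovCfin.mem_toFinset.mpr ⟨Sum.inl j, ⟨j, rfl⟩, hmem h⟩, hmem h⟩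
    rw [hset, Finset.card_pair hxney]
  have hsum : 2 * Wf.card = 2 * Cf.card := by
    calc 2 * Wf.card = ∑ _v ∈ Wf, 2 := by rw [Finset.sum_const, smul_eq_mul, mul_comm]
      _ = ∑ v ∈ Wf, (Cf.filter (fun e => v ∈ G.ends e)).card :=
          Finset.sum_congr rfl (fun v hv => (key1 v hv).symm)
      _ = ∑ v ∈ Wf, ∑ e ∈ Cf, if v ∈ G.ends e then 1 else 0 :=
          Finset.sum_congr rfl (fun v _ => Finset.card_filter _ _)
      _ = ∑ e ∈ Cf, ∑ v ∈ Wf, if v ∈ G.ends e then 1 else 0 := Finset.sum_comm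
      _ = ∑ e ∈ Cf, (Wf.filter (fun v => v ∈ G.ends e)).card :=
          Finset.sum_congr rfl (fun e _ => (Finset.card_filter _ _).symm)
      _ = ∑ _e ∈ Cf, 2 := Finset.sum_congr rfl key2
      _ = 2 * Cf.card := by rw [Finset.sum_const, smul_eq_mul, mul_comm]
  have hcovCcard : (NoGraphAux.cover G C).ncard = n := by
    rw [Set.ncard_eq_toFinset_card _ hcovCfin, ← hWf]
    omega
  -- consecutive cycle edges share a vertex
  have hadj : ∀ i : ZMod n, ∃ v, v ∈ G.ends (Sum.inl i : MnElem n) ∧ v ∈ G.ends (Sum.inl (i + 1) : MnElem n) := by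
    intro i
    by_contra hno
    push_neg at hno
    have hYfin : (C \ {Sum.inl i, Sum.inl (i + 1)}).Finite := hCfin.diff
    have hpairsub : ({Sum.inl i, Sum.inl (i + 1)} : Set (MnElem n)) ⊆ C := by
      intro e he
      simp only [Set.mem_insert_iff, Set.mem_singleton_iff] at he
      rcases he with rfl | rfl
      exacts [⟨i, rfl⟩, ⟨i + 1, rfl⟩]
    have hpairne : (Sum.inl i : MnElem n) ≠ Sum.inl (i + 1) := by
      simp only [ne_eq, Sum.inl.injEq]
      exact fun h => hstep1 i h.symm
    have hYcard : (C \ {Sum.inl i, Sum.inl (i + 1)}).ncard = n - 2 := by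
      rw [Set.ncard_diff hpairsub (Set.toFinite _), hCcard, Set.ncard_pair hpairne]
    have hcovY : NoGraphAux.cover G (C \ {Sum.inl i, Sum.inl (i + 1)}) = NoGraphAux.cover G C := by
      apply subset_antisymm
      · rintro v ⟨e, he, hv⟩; exact ⟨e, he.1, hv⟩
      · rintro v ⟨e0, he0, hv0⟩
        by_cases hsub : {e ∈ C | v ∈ G.ends e} ⊆ {Sum.inl i, Sum.inl (i + 1)}
        · exfalso
          have heq : {e ∈ C | v ∈ G.ends e} = {Sum.inl i, Sum.inl (i + 1)} :=
            Set.eq_of_subset_of_ncard_le hsub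
              (by rw [hDtwo v ⟨e0, he0, hv0⟩, Set.ncard_pair hpairne]) (Set.toFinite _)
          have hm1 : (Sum.inl i : MnElem n) ∈ {e ∈ C | v ∈ G.ends e} := by
            rw [heq]; exact Set.mem_insert _ _
          have hm2 : (Sum.inl (i + 1) : MnElem n) ∈ {e ∈ C | v ∈ G.ends e} := by
            rw [heq]; exact Set.mem_insert_of_mem _ rfl
          exact hno v hm1.2 hm2.2
        · obtain ⟨e, he, hep⟩ := Set.not_subset.mp hsub
          exact ⟨e, ⟨he.1, hep⟩, he.2⟩
    have hbound := NoGraphAux.cover_card_le G hYfin (hYconn i) (hmemY i)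
    rw [hcovY, hcovCcard, hYcard] at hbound
    omega
  choose vv hvv1 hvv2 using hadj
  have hDle : ∀ v : Vt, ({e ∈ C | v ∈ G.ends e}).ncard ≤ 2 := by
    intro v; rcases hD v with h | h <;> omega
  have htriple : ∀ (v : Vt) (i : ZMod n) (e : MnElem n),
      v ∈ G.ends (Sum.inl i : MnElem n) → v ∈ G.ends (Sum.inl (i + 1) : MnElem n) → e ∈ C →
      v ∈ G.ends e → e ≠ Sum.inl i → e ≠ Sum.inl (i + 1) → False := by
    intro v i e hv1 hv2 heC hve hne1 hne2
    have hsub : ({Sum.inl i, Sum.inl (i + 1), e} : Set (MnElem n)) ⊆ {e' ∈ C | v ∈ G.ends e'} := by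
      intro e' he'
      simp only [Set.mem_insert_iff, Set.mem_singleton_iff] at he'
      rcases he' with rfl | rfl | rfl
      · exact ⟨⟨i, rfl⟩, hv1⟩
      · exact ⟨⟨i + 1, rfl⟩, hv2⟩
      · exact ⟨heC, hve⟩
    have hpairne : (Sum.inl i : MnElem n) ≠ Sum.inl (i + 1) := by
      simp only [ne_eq, Sum.inl.injEq]
      exact fun h => hstep1 i h.symm
    have hc3 : ({Sum.inl i, Sum.inl (i + 1), e} : Set (MnElem n)).ncard = 3 :=
      Set.ncard_eq_three.mpr ⟨_, _, _, hpairne, Ne.symm hne1, Ne.symm hne2, rfl⟩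
    have hle3 := Set.ncard_le_ncard hsub (hDfin v)
    have hle2 := hDle v
    rw [hc3] at hle3
    omega
  have hvvne : ∀ i : ZMod n, vv i ≠ vv (i + 1) := by
    intro i heq
    refine htriple (vv i) i (Sum.inl (i + 2)) (hvv1 i) (hvv2 i) ⟨i + 2, rfl⟩ ?_ ?_ ?_
    · rw [heq]
      have h := hvv2 (i + 1)
      have hrw : i + 1 + 1 = i + 2 := by ring
      rwa [hrw] at h
    · simp only [ne_eq, Sum.inl.injEq]; exact hstep2 i
    · simp only [ne_eq, Sum.inl.injEq]; exact hstep21 i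
  have huvv : ∀ i : ZMod n, u ≠ vv i := by
    intro i heq
    obtain ⟨e, heY, hue⟩ := hreach i
    refine htriple (vv i) i e (hvv1 i) (hvv2 i) heY.1 (heq ▸ hue) ?_ ?_
    · intro h; exact heY.2 (by rw [h]; exact Set.mem_insert _ _)
    · intro h; exact heY.2 (by rw [h]; exact Set.mem_insert_of_mem _ rfl)
  -- endgame
  obtain ⟨e, heY, hue⟩ := hreach 0
  obtain ⟨j, rfl⟩ := heY.1
  obtain ⟨x, y, hxy⟩ := NoGraphAux.sym2_exists_pair (G.ends (Sum.inl j : MnElem n))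
  have hj1 : vv (j - 1) ∈ G.ends (Sum.inl j : MnElem n) := by
    have h := hvv2 (j - 1)
    have hrw : j - 1 + 1 = j := by ring
    rwa [hrw] at h
  have hj2 : vv j ∈ G.ends (Sum.inl j : MnElem n) := hvv1 j
  have hjne : vv (j - 1) ≠ vv j := by
    have h := hvvne (j - 1)
    have hrw : j - 1 + 1 = j := by ring
    rwa [hrw] at h
  have hu1 : u ≠ vv (j - 1) := huvv (j - 1)
  have hu2 : u ≠ vv j := huvv j
  rw [hxy] at hue hj1 hj2
  rcases Sym2.mem_iff.mp hue with rfl | rfl <;>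
    rcases Sym2.mem_iff.mp hj1 with h1 | h1 <;>
      rcases Sym2.mem_iff.mp hj2 with h2 | h2 <;>
        first
          | exact hu1 h1.symm
          | exact hu2 h2.symm
          | exact hjne (h1.trans h2.symm)
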